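/- The equality 1/cos(π/5) + 2·(2+√5) · (sin(3π/5)/sin(3π/10)) · tan(π/5) ≤ 2·(2+√5) holds. -/

import Mathlib

theorem theta5_constant_inequality :
    1 / Real.cos (Real.pi / 5) +
      2 * (2 + Real.sqrt 5) * (Real.sin (3 * Real.pi / 5) / Real.sin (3 * Real.pi / 10)) *
        Real.tan (Real.pi / 5) ≤ 2 * (2 + Real.sqrt 5) := by
  have h5 : Real.sqrt 5 ^ 2 = 5 := Real.sq_sqrt (by norm_num)
  have h5nn : (0:ℝ) ≤ Real.sqrt 5 := Real.sqrt_nonneg 5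
  have hcos : Real.cos (Real.pi / 5) = (1 + Real.sqrt 5) / 4 := Real.cos_pi_div_five
  have hcpos : 0 < Real.cos (Real.pi / 5) := by rw [hcos]; linarith
  have h35 : Real.sin (3 * Real.pi / 5) = 2 * Real.sin (Real.pi / 5) * Real.cos (Real.pi / 5) := by
    have h : 3 * Real.pi / 5 = Real.pi - 2 * (Real.pi / 5) := by ring
    rw [h, Real.sin_pi_sub, Real.sin_two_mul]
  have h310 : Real.sin (3 * Real.pi / 10) = Real.cos (Real.pi / 5) := by
    have h : 3 * Real.pi / 10 = Real.pi / 2 - Real.pi / 5 := by ring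
    rw [h, Real.sin_pi_div_two_sub]
  have hs2 : Real.sin (Real.pi / 5) ^ 2 = 1 - Real.cos (Real.pi / 5) ^ 2 := by
    have := Real.sin_sq_add_cos_sq (Real.pi / 5)
    linarith
  rw [h35, h310, Real.tan_eq_sin_div_cos]
  rw [hcos] at hs2 ⊢
  have hne : (1 + Real.sqrt 5) / 4 ≠ 0 := by positivity
  field_simp
  nlinarith [hs2, h5, h5nn, sq_nonneg (Real.sin (Real.pi / 5))]
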